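/- Let n ≥ 2 be even, let ζ be a primitive n-th root of unity in ℂ, and set γ_k = ζ^k + ζ^{-k}, δ_k = ζ^k - ζ^{-k}. Then for every a ∈ ℂ, as polynomials in x, y, one has D_n(x, a) - D_n(y, a) = (x - y)(x + y) · ∏_{k=1}^{(n-2)/2} (x² - γ_k·x·y + y² + δ_k²·a). -/

import Mathlib

/-- The Dickson polynomials (as functions): `D 0 a x = 2`, `D 1 a x = x`,
`D (n+2) a x = x * D (n+1) a x - a * D n a x`. -/
def dicksonC : ℕ → ℂ → ℂ → ℂ
  | 0, _, _ => 2
  | 1, _, x => x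
  | n + 2, a, x => x * dicksonC (n + 1) a x - a * dicksonC n a x

lemma dicksonC_eval (a u v : ℂ) (h : u * v = a) :
    ∀ n, dicksonC n a (u + v) = u ^ n + v ^ n
  | 0 => by norm_num [dicksonC]
  | 1 => by simp [dicksonC]
  | (n + 2) => by
      rw [dicksonC, dicksonC_eval a u v h (n + 1), dicksonC_eval a u v h n, ← h]
      ring

lemma prod_root (n : ℕ) (hn : 0 < n) (ζ : ℂ) (hζ : IsPrimitiveRoot ζ n) (s c : ℂ) :
    ∏ k ∈ Finset.range n, (s - ζ ^ k * c) = s ^ n - c ^ n := by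
  have h := congrArg (Polynomial.eval s)
    (X_pow_sub_C_eq_prod hζ hn (rfl : c ^ n = c ^ n))
  simpa [Polynomial.eval_prod] using h.symm

lemma pairing (n : ℕ) (hn : 2 ≤ n) (heven : Even n) (ζ : ℂ) (hζ : IsPrimitiveRoot ζ n)
    (u v x : ℂ) :
    ∏ k ∈ Finset.range n, (x - (ζ ^ k * u + ζ⁻¹ ^ k * v)) =
      (x - (u + v)) * (x + (u + v)) * ∏ k ∈ Finset.Icc 1 ((n - 2) / 2),
        (x ^ 2 - (ζ ^ k + ζ⁻¹ ^ k) * x * (u + v) + (u + v) ^ 2 +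
          (ζ ^ k - ζ⁻¹ ^ k) ^ 2 * (u * v)) := by
  obtain ⟨m, hm⟩ : ∃ m, n = 2 * m + 2 := ⟨(n - 2) / 2, by obtain ⟨c, hc⟩ := heven; omega⟩
  have hmeq : (n - 2) / 2 = m := by omega
  have hzn : ζ ^ n = 1 := hζ.pow_eq_one
  have hz0 : ζ ≠ 0 := hζ.ne_zero (by omega)
  have hhalf : ζ ^ (m + 1) = -1 :=
    (hζ.pow (by omega : 0 < n) (show n = (m + 1) * 2 by omega)).eq_neg_one_of_two_right
  have hhalf' : ζ⁻¹ ^ (m + 1) = -1 := by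
    rw [inv_pow, hhalf]; norm_num
  set f : ℕ → ℂ := fun k => x - (ζ ^ k * u + ζ⁻¹ ^ k * v) with hf
  have hfn : ∀ k ∈ Finset.Icc 1 m, f (n - k) = x - (ζ⁻¹ ^ k * u + ζ ^ k * v) := by
    intro k hk
    simp only [Finset.mem_Icc] at hk
    have h1 : ζ ^ (n - k) = ζ⁻¹ ^ k := by
      rw [pow_sub₀ _ hz0 (by omega), hzn, inv_pow]
      simp [div_eq_mul_inv]
    have h2 : ζ⁻¹ ^ (n - k) = ζ ^ k := by
      have hzi : ζ⁻¹ ≠ 0 := inv_ne_zero hz0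
      rw [pow_sub₀ _ hzi (by omega), inv_pow, hzn, inv_one, inv_pow, inv_inv]
      simp [div_eq_mul_inv]
    simp [hf, h1, h2]
  have split1 : ∏ k ∈ Finset.range n, f k =
      f 0 * ((∏ k ∈ Finset.Ico 1 (m + 1), f k) *
        (f (m + 1) * ∏ k ∈ Finset.Ico (m + 2) n, f k)) := by
    rw [Finset.range_eq_Ico,
      ← Finset.prod_Ico_consecutive f (by omega : (0:ℕ) ≤ 1) (by omega : 1 ≤ n),
      ← Finset.prod_Ico_consecutive f (by omega : (1:ℕ) ≤ m + 1) (by omega : m + 1 ≤ n),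
      ← Finset.prod_Ico_consecutive f (by omega : (m+1:ℕ) ≤ m + 2) (by omega : m + 2 ≤ n)]
    congr 1
    · simp
    · congr 1
      congr 1
      simp
  have reflect : ∏ k ∈ Finset.Ico (m + 2) n, f k = ∏ k ∈ Finset.Icc 1 m, f (n - k) := by
    refine Finset.prod_nbij' (fun k => n - k) (fun k => n - k) ?_ ?_ ?_ ?_ ?_ <;>
        intro b hb <;> simp only [Finset.mem_Ico, Finset.mem_Icc] at hb ⊢
    · omega
    · omega
    · omega
    · omega
    · rw [Nat.sub_sub_self (by omega : b ≤ n)]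
  have hterm : ∀ k ∈ Finset.Icc 1 m, f k * f (n - k) =
      x ^ 2 - (ζ ^ k + ζ⁻¹ ^ k) * x * (u + v) + (u + v) ^ 2 +
        (ζ ^ k - ζ⁻¹ ^ k) ^ 2 * (u * v) := by
    intro k hk
    rw [hfn k hk]
    have hk1 : ζ ^ k * ζ⁻¹ ^ k = 1 := by
      rw [inv_pow, mul_inv_cancel₀ (pow_ne_zero _ hz0)]
    simp only [hf]
    linear_combination ((u + v) ^ 2) * hk1
  have combined : (∏ k ∈ Finset.Icc 1 m, f k) * (∏ k ∈ Finset.Icc 1 m, f (n - k)) =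
      ∏ k ∈ Finset.Icc 1 m, (x ^ 2 - (ζ ^ k + ζ⁻¹ ^ k) * x * (u + v) + (u + v) ^ 2 +
        (ζ ^ k - ζ⁻¹ ^ k) ^ 2 * (u * v)) := by
    rw [← Finset.prod_mul_distrib]
    exact Finset.prod_congr rfl hterm
  have hIco : Finset.Ico 1 (m + 1) = Finset.Icc 1 m := Finset.Ico_add_one_right_eq_Icc 1 m
  have h0 : f 0 = x - (u + v) := by simp [hf]
  have hmid : f (m + 1) = x + (u + v) := by
    simp only [hf, hhalf, hhalf']; ring
  calc ∏ k ∈ Finset.range n, f k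
      = (f 0 * f (m + 1)) * ((∏ k ∈ Finset.Icc 1 m, f k) *
          (∏ k ∈ Finset.Icc 1 m, f (n - k))) := by rw [split1, reflect, hIco]; ring
    _ = (x - (u + v)) * (x + (u + v)) * ∏ k ∈ Finset.Icc 1 ((n - 2) / 2),
          (x ^ 2 - (ζ ^ k + ζ⁻¹ ^ k) * x * (u + v) + (u + v) ^ 2 +
            (ζ ^ k - ζ⁻¹ ^ k) ^ 2 * (u * v)) := by
        rw [combined, h0, hmid, hmeq]

lemma full_prod (n : ℕ) (hn : 2 ≤ n) (ζ : ℂ) (hζ : IsPrimitiveRoot ζ n)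
    (a s u : ℂ) (hs : s ≠ 0) (hu : u ≠ 0) :
    dicksonC n a (s + a * s⁻¹) - dicksonC n a (u + a * u⁻¹) =
      ∏ k ∈ Finset.range n, ((s + a * s⁻¹) - (ζ ^ k * u + ζ⁻¹ ^ k * (a * u⁻¹))) := by
  have hz0 : ζ ≠ 0 := hζ.ne_zero (by omega)
  rw [dicksonC_eval a s (a * s⁻¹) (by field_simp) n,
    dicksonC_eval a u (a * u⁻¹) (by field_simp) n]
  have hfac : ∀ k ∈ Finset.range n, (s + a * s⁻¹) - (ζ ^ k * u + ζ⁻¹ ^ k * (a * u⁻¹)) =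
      s⁻¹ * ((s - ζ ^ k * u) * (s - ζ⁻¹ ^ k * (a * u⁻¹))) := by
    intro k _
    field_simp
    ring_nf
    rw [mul_assoc (a * u), ← mul_pow, mul_inv_cancel₀ hz0, one_pow, mul_one]
  rw [Finset.prod_congr rfl hfac, Finset.prod_mul_distrib, Finset.prod_mul_distrib,
    Finset.prod_const, Finset.card_range,
    prod_root n (by omega) ζ hζ s u, prod_root n (by omega) ζ⁻¹ hζ.inv s (a * u⁻¹)]
  simp only [mul_pow, inv_pow]
  field_simp
  ring

/-- For even `n ≥ 2` and `ζ` a primitive `n`-th root of unity, with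
`γ_k = ζᵏ + ζ⁻ᵏ` and `δ_k = ζᵏ - ζ⁻ᵏ`, one has
`D n (x,a) - D n (y,a) = (x-y)(x+y) ∏_{k=1}^{(n-2)/2} (x² - γ_k x y + y² + δ_k² a)`. -/
theorem dickson_diff_factorization_even (n : ℕ) (hn : 2 ≤ n) (heven : Even n)
    (ζ : ℂ) (hζ : IsPrimitiveRoot ζ n) (a : ℂ) : ∀ x y : ℂ,
    dicksonC n a x - dicksonC n a y =
      (x - y) * (x + y) * ∏ k ∈ Finset.Icc 1 ((n - 2) / 2),
        (x ^ 2 - (ζ ^ k + ζ⁻¹ ^ k) * x * y + y ^ 2 + (ζ ^ k - ζ⁻¹ ^ k) ^ 2 * a) := by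
  have hn0 : n ≠ 0 := by omega
  have key : ∀ s u : ℂ, s ≠ 0 → u ≠ 0 →
      dicksonC n a (s + a * s⁻¹) - dicksonC n a (u + a * u⁻¹) =
      ((s + a * s⁻¹) - (u + a * u⁻¹)) * ((s + a * s⁻¹) + (u + a * u⁻¹)) *
        ∏ k ∈ Finset.Icc 1 ((n - 2) / 2),
          ((s + a * s⁻¹) ^ 2 - (ζ ^ k + ζ⁻¹ ^ k) * (s + a * s⁻¹) * (u + a * u⁻¹) +
            (u + a * u⁻¹) ^ 2 + (ζ ^ k - ζ⁻¹ ^ k) ^ 2 * a) := by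
    intro s u hs hu
    rw [full_prod n hn ζ hζ a s u hs hu,
      pairing n hn heven ζ hζ u (a * u⁻¹) (s + a * s⁻¹),
      show u * (a * u⁻¹) = a by field_simp]
  intro x y
  by_cases ha : a = 0
  · subst ha
    have hD : ∀ t : ℂ, dicksonC n 0 t = t ^ n := by
      intro t
      have := dicksonC_eval 0 t 0 (by ring) n
      simpa [zero_pow hn0] using this
    have hcard : (Finset.Icc 1 ((n - 2) / 2)).card = (n - 2) / 2 := by
      simp [Nat.card_Icc]
    have hnm : n = 2 * ((n - 2) / 2) + 2 := by obtain ⟨c, hc⟩ := heven; omega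
    by_cases hx : x = 0 <;> by_cases hy : y = 0
    · subst hx; subst hy; simp [hD, zero_pow hn0]
    · subst hx
      rw [hD, hD, zero_pow hn0]
      have hconst : (∏ k ∈ Finset.Icc 1 ((n - 2) / 2),
          ((0:ℂ) ^ 2 - (ζ ^ k + ζ⁻¹ ^ k) * 0 * y + y ^ 2 + (ζ ^ k - ζ⁻¹ ^ k) ^ 2 * 0)) =
          (y ^ 2) ^ ((n - 2) / 2) := by
        rw [Finset.prod_congr rfl (fun k _ => (by ring :
          ((0:ℂ) ^ 2 - (ζ ^ k + ζ⁻¹ ^ k) * 0 * y + y ^ 2 + (ζ ^ k - ζ⁻¹ ^ k) ^ 2 * 0) = y ^ 2)),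
          Finset.prod_const, hcard]
      rw [hconst]
      have hpow : (y : ℂ) ^ n = (y ^ 2) ^ ((n - 2) / 2) * y ^ 2 := by
        conv_lhs => rw [hnm]
        rw [pow_add, pow_mul]
      rw [hpow]
      ring
    · subst hy
      rw [hD, hD, zero_pow hn0]
      have hconst : (∏ k ∈ Finset.Icc 1 ((n - 2) / 2),
          (x ^ 2 - (ζ ^ k + ζ⁻¹ ^ k) * x * 0 + (0:ℂ) ^ 2 + (ζ ^ k - ζ⁻¹ ^ k) ^ 2 * 0)) =
          (x ^ 2) ^ ((n - 2) / 2) := by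
        rw [Finset.prod_congr rfl (fun k _ => (by ring :
          (x ^ 2 - (ζ ^ k + ζ⁻¹ ^ k) * x * 0 + (0:ℂ) ^ 2 + (ζ ^ k - ζ⁻¹ ^ k) ^ 2 * 0) = x ^ 2)),
          Finset.prod_const, hcard]
      rw [hconst]
      have hpow : (x : ℂ) ^ n = (x ^ 2) ^ ((n - 2) / 2) * x ^ 2 := by
        conv_lhs => rw [hnm]
        rw [pow_add, pow_mul]
      rw [hpow]
      ring
    · have := key x y hx hy
      simpa using this
  · have hrep : ∀ z : ℂ, ∃ s, s ≠ 0 ∧ s + a * s⁻¹ = z := by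
      intro z
      obtain ⟨t, ht⟩ := IsAlgClosed.exists_pow_nat_eq (z ^ 2 - 4 * a) (by norm_num : 0 < 2)
      have hprod : (z + t) / 2 * ((z - t) / 2) = a := by
        field_simp
        linear_combination -ht
      have hs : (z + t) / 2 ≠ 0 := by
        intro h0
        exact ha (by rw [← hprod, h0, zero_mul])
      refine ⟨(z + t) / 2, hs, ?_⟩
      have hinv : a * ((z + t) / 2)⁻¹ = (z - t) / 2 := by
        have hzt : z + t ≠ 0 := by
          intro h; exact hs (by rw [h]; ring)
        field_simp
        linear_combination -4 * hprod
      rw [hinv]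
      ring
    obtain ⟨s, hs, hsx⟩ := hrep x
    obtain ⟨u, hu, huy⟩ := hrep y
    rw [← hsx, ← huy]
    exact key s u hs hu
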